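/- Let n ≥ 1 and let (μ_1, …, μ_{n+1}) be a random vector in ℝ^{n+1} whose joint law is invariant under every permutation of its n+1 coordinates (i.e., the coordinates are exchangeable). Then for every natural number k with 0 ≤ k ≤ n+1, the probability P( #{i ∈ {1,…,n+1} : μ_i ≥ μ_{n+1}} ≤ k ) ≤ k/(n+1). -/

import Mathlib

open MeasureTheory Finset
open scoped ENNReal

/-- Rank function: number of coordinates `i` with `x j ≤ x i`. -/
private noncomputable def rnk {m : ℕ} (j : Fin m) (x : Fin m → ℝ) : ℕ :=
  (univ.filter (fun i : Fin m => x j ≤ x i)).card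

private lemma card_filter_perm {m : ℕ} (σ : Equiv.Perm (Fin m)) (p : Fin m → Prop)
    [DecidablePred p] :
    (univ.filter fun i => p (σ i)).card = (univ.filter p).card := by
  apply Finset.card_bij (fun i _ => σ i)
  · intro a ha; simp only [mem_filter, mem_univ, true_and] at ha ⊢; exact ha
  · intro a _ b _ h; exact σ.injective h
  · intro b hb
    refine ⟨σ.symm b, ?_, by simp⟩
    simp only [mem_filter, mem_univ, true_and, Equiv.apply_symm_apply] at hb ⊢
    exact hb

private lemma rnk_comp {m : ℕ} (σ : Equiv.Perm (Fin m)) (j : Fin m) (x : Fin m → ℝ) :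
    rnk j (x ∘ σ) = rnk (σ j) x := by
  unfold rnk
  exact card_filter_perm σ (fun i => x (σ j) ≤ x i)

private lemma measurable_rnk {m : ℕ} (j : Fin m) : Measurable (rnk j) := by
  have : rnk j = fun x => ∑ i : Fin m, if x j ≤ x i then 1 else 0 := by
    funext x; simp [rnk, Finset.sum_boole]
  rw [this]
  exact Finset.measurable_sum _ fun i _ =>
    Measurable.ite (measurableSet_le (measurable_pi_apply j) (measurable_pi_apply i))
      measurable_const measurable_const

/-- At most `k` indices can have rank `≤ k`. -/
private lemma card_low_rank {m : ℕ} (x : Fin m → ℝ) (k : ℕ) :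
    (univ.filter fun j => rnk j x ≤ k).card ≤ k := by
  set S := univ.filter fun j => rnk j x ≤ k with hS
  rcases S.eq_empty_or_nonempty with h | h
  · simp [h]
  · obtain ⟨j, hjS, hmin⟩ := S.exists_min_image x h
    have hsub : S ⊆ univ.filter fun i => x j ≤ x i := by
      intro i hi
      simp only [mem_filter, mem_univ, true_and]
      exact hmin i hi
    have h1 : S.card ≤ rnk j x := Finset.card_le_card hsub
    have h2 : rnk j x ≤ k := by
      simpa [hS] using (Finset.mem_filter.mp hjS).2
    exact h1.trans h2

theorem conformal_rank_tail_bound {Ω : Type*} [MeasurableSpace Ω]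
    (ℙ : Measure Ω) [IsProbabilityMeasure ℙ]
    (n : ℕ) (hn : 1 ≤ n) (μ : Ω → Fin (n + 1) → ℝ) (hμ : Measurable μ)
    (hexch : ∀ σ : Equiv.Perm (Fin (n + 1)),
      Measure.map (fun ω => μ ω ∘ σ) ℙ = Measure.map μ ℙ)
    (k : ℕ) (hk : k ≤ n + 1) :
    ℙ {ω | (univ.filter (fun i : Fin (n + 1) => μ ω (Fin.last n) ≤ μ ω i)).card ≤ k}
      ≤ (k : ℝ≥0∞) / (n + 1) := by
  set B : Fin (n + 1) → Set (Fin (n + 1) → ℝ) := fun j => {x | rnk j x ≤ k} with hB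
  have hBmeas : ∀ j, MeasurableSet (B j) := fun j =>
    (measurable_rnk j) (measurableSet_Iic (a := k))
  have hA : ∀ j, MeasurableSet (μ ⁻¹' B j) := fun j => hμ (hBmeas j)
  -- all events have the same probability
  have hsame : ∀ j : Fin (n + 1), ℙ (μ ⁻¹' B j) = ℙ (μ ⁻¹' B (Fin.last n)) := by
    intro j
    set σ := Equiv.swap j (Fin.last n) with hσ
    have hmc : Measurable (fun ω => μ ω ∘ σ) :=
      measurable_pi_lambda _ fun i => (measurable_pi_apply (σ i)).comp hμ
    have h1 := congrArg (fun m : Measure (Fin (n+1) → ℝ) => m (B (Fin.last n))) (hexch σ)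
    rw [Measure.map_apply hmc (hBmeas (Fin.last n)),
        Measure.map_apply hμ (hBmeas (Fin.last n))] at h1
    have hpre : (fun ω => μ ω ∘ σ) ⁻¹' B (Fin.last n) = μ ⁻¹' B j := by
      ext ω
      simp only [Set.mem_preimage, hB, Set.mem_setOf_eq, rnk_comp σ (Fin.last n) (μ ω)]
      rw [hσ, Equiv.swap_apply_right]
    rw [hpre] at h1
    exact h1
  -- sum of the probabilities is at most k
  have hsum : ∑ j : Fin (n + 1), ℙ (μ ⁻¹' B j) ≤ (k : ℝ≥0∞) := by
    have h1 : ∀ j : Fin (n + 1), ℙ (μ ⁻¹' B j)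
        = ∫⁻ ω, (μ ⁻¹' B j).indicator (fun _ => (1 : ℝ≥0∞)) ω ∂ℙ := by
      intro j
      rw [lintegral_indicator (hA j)]
      simp
    calc ∑ j : Fin (n + 1), ℙ (μ ⁻¹' B j)
        = ∑ j : Fin (n + 1), ∫⁻ ω, (μ ⁻¹' B j).indicator (fun _ => (1 : ℝ≥0∞)) ω ∂ℙ := by
          simp_rw [h1]
      _ = ∫⁻ ω, ∑ j : Fin (n + 1), (μ ⁻¹' B j).indicator (fun _ => (1 : ℝ≥0∞)) ω ∂ℙ := by
          rw [lintegral_finset_sum]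
          exact fun j _ => measurable_const.indicator (hA j)
      _ ≤ ∫⁻ _, (k : ℝ≥0∞) ∂ℙ := by
          refine lintegral_mono fun ω => ?_
          have hterm : ∀ j : Fin (n + 1), (μ ⁻¹' B j).indicator (fun _ => (1 : ℝ≥0∞)) ω
              = if rnk j (μ ω) ≤ k then 1 else 0 := by
            intro j
            by_cases h : rnk j (μ ω) ≤ k <;> simp [hB, Set.indicator_apply, h]
          have hcard : ∑ j : Fin (n + 1), (μ ⁻¹' B j).indicator (fun _ => (1 : ℝ≥0∞)) ω
              = ((univ.filter fun j : Fin (n + 1) => rnk j (μ ω) ≤ k).card : ℝ≥0∞) := by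
            rw [Finset.sum_congr rfl fun j _ => hterm j, Finset.sum_boole]
          show ∑ j : Fin (n + 1), (μ ⁻¹' B j).indicator (fun _ => (1 : ℝ≥0∞)) ω ≤ (k : ℝ≥0∞)
          rw [hcard]
          exact_mod_cast Nat.cast_le.mpr (card_low_rank (μ ω) k)
      _ = (k : ℝ≥0∞) := by simp
  have hall : ∑ j : Fin (n + 1), ℙ (μ ⁻¹' B j)
      = (n + 1 : ℝ≥0∞) * ℙ (μ ⁻¹' B (Fin.last n)) := by
    rw [Finset.sum_congr rfl fun j _ => hsame j]
    simp [Finset.sum_const, mul_comm]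
  rw [hall] at hsum
  have hne : ((n : ℝ≥0∞) + 1) ≠ 0 := by
    simp
  have hnt : ((n : ℝ≥0∞) + 1) ≠ ⊤ := by
    simp [ENNReal.add_ne_top]
  have : ℙ (μ ⁻¹' B (Fin.last n)) ≤ (k : ℝ≥0∞) / (n + 1) := by
    rw [ENNReal.le_div_iff_mul_le (Or.inl hne) (Or.inl hnt), mul_comm]
    exact hsum
  exact this
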